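/- Let n ≥ 2, p ≥ 1, λ ∈ (1, ∞) with λ' = λ/(λ−1), and let K ⊂ ℝⁿ be a convex body with the origin in its interior, with gauge function g(K,x) = inf{ t > 0 : x ∈ tK }. Then for every nonzero nonnegative continuous function f : ℝⁿ → ℝ with compact support, ‖f‖₁^{n + pλ'} ≤ a_{n,p,λ} ( ∫_{ℝⁿ} f(x) g(K,x)^p dx )^{n} ‖f‖_λ^{pλ'} vol(K)^{p}. -/

import Mathlib

open MeasureTheory Real
open scoped RealInnerProductSpace

open scoped Pointwise

lemma LYZ_beta_aux {a b : ℝ} (ha : 1 ≤ a) (hb : 0 < b) :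
    ∫ x in Set.Ioi (0:ℝ), x ^ (a-1) * max (1-x) 0 ^ b
      = Real.Gamma a * Real.Gamma (b+1) / Real.Gamma (a+b+1) := by
  have ha0 : (0:ℝ) < a := lt_of_lt_of_le one_pos ha
  have hab : (0:ℝ) < a + b + 1 := by linarith
  set I : ℝ := ∫ x in (0:ℝ)..1, x ^ (a-1) * (1-x) ^ b with hI
  have hbeta : Complex.betaIntegral (a:ℂ) ((b+1:ℝ):ℂ) = (I:ℂ) := by
    rw [Complex.betaIntegral, hI, ← intervalIntegral.integral_ofReal]
    apply intervalIntegral.integral_congr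
    intro x hx
    rw [Set.uIcc_of_le zero_le_one] at hx
    have hx0 : (0:ℝ) ≤ x := hx.1
    have hx1 : (0:ℝ) ≤ 1 - x := by linarith [hx.2]
    simp only [Complex.ofReal_mul]
    congr 1
    · rw [Complex.ofReal_cpow hx0]; push_cast; ring
    · rw [Complex.ofReal_cpow hx1]; push_cast; ring
  have hb1 : (0:ℝ) < (((b+1:ℝ):ℂ)).re := by simpa using by linarith
  have hgam := Complex.Gamma_mul_Gamma_eq_betaIntegral
    (s := (a:ℂ)) (t := ((b+1:ℝ):ℂ)) (by simpa using ha0) hb1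
  rw [hbeta] at hgam
  have hcast : ((a:ℂ) + ((b+1:ℝ):ℂ)) = ((a+b+1 : ℝ):ℂ) := by push_cast; ring
  rw [hcast, Complex.Gamma_ofReal, Complex.Gamma_ofReal, Complex.Gamma_ofReal] at hgam
  have hreal : Real.Gamma a * Real.Gamma (b+1) = Real.Gamma (a+b+1) * I := by
    exact_mod_cast hgam
  have hΓ : (0:ℝ) < Real.Gamma (a+b+1) := Real.Gamma_pos_of_pos hab
  have hIval : I = Real.Gamma a * Real.Gamma (b+1) / Real.Gamma (a+b+1) := by
    field_simp at hreal ⊢; linarith [hreal]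
  rw [← hIval]
  -- now convert the Ioi integral to the interval integral
  rw [hI, intervalIntegral.integral_of_le zero_le_one,
    ← integral_indicator measurableSet_Ioi, ← integral_indicator measurableSet_Ioc]
  congr 1
  funext x
  rcases le_or_gt x 0 with hx0 | hx0
  · rw [Set.indicator_of_notMem (by simp only [Set.mem_Ioi, not_lt]; exact hx0),
      Set.indicator_of_notMem (fun h => absurd h.1 (not_lt.2 hx0))]
  rcases le_or_gt x 1 with hx1 | hx1
  · rw [Set.indicator_of_mem (Set.mem_Ioi.2 hx0), Set.indicator_of_mem (Set.mem_Ioc.2 ⟨hx0, hx1⟩),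
      max_eq_left (by linarith)]
  · rw [Set.indicator_of_mem (Set.mem_Ioi.2 hx0), Set.indicator_of_notMem (fun h => absurd h.2 (not_le.2 hx1)),
      max_eq_right (by linarith), Real.zero_rpow hb.ne']
    ring

set_option maxHeartbeats 1000000 in
lemma LYZ_const_aux {q D lamv : ℝ} (hq1 : 1 < q) (hD0 : 0 < D) (hlam0 : 0 < lamv)
    (hqlam : lamv * (q-1) = q) :
    (D+q)^(q+D) * ((lamv^(1-q)/q) * (q-1)^(1-q) * D^(-D)
        * (q * (Real.Gamma q * Real.Gamma (D+1) / Real.Gamma (q+D+1))))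
      = D * ((D+q)/q)^(q-1) * ((q+D)/D)^D
        * (Real.Gamma D * Real.Gamma q / Real.Gamma (D+q)) := by
  have hq0 : (0:ℝ) < q := by linarith
  have hq1' : (0:ℝ) < q - 1 := by linarith
  have hDq0 : (0:ℝ) < D + q := by linarith
  have hW0 : (0:ℝ) < q^(q-1) := Real.rpow_pos_of_pos hq0 _
  have hZ0 : (0:ℝ) < D^D := Real.rpow_pos_of_pos hD0 _
  have hGDq : (0:ℝ) < Real.Gamma (D+q) := Real.Gamma_pos_of_pos (by linarith)
  have hcR : lamv^(1-q)/q * (q-1)^(1-q) = (q^(q-1))⁻¹ / q := by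
    rw [div_mul_eq_mul_div, ← Real.mul_rpow hlam0.le hq1'.le, hqlam,
      show (1-q) = -(q-1) by ring, Real.rpow_neg hq0.le]
  have hs1 : (D+q)^(q+D) = (D+q)^(q-1) * (D+q)^D * (D+q) := by
    rw [show q+D = (q-1)+D+1 by ring, Real.rpow_add hDq0, Real.rpow_add hDq0,
      Real.rpow_one]
  have hs2 : ((D+q)/q)^(q-1) = (D+q)^(q-1)/q^(q-1) := Real.div_rpow hDq0.le hq0.le _
  have hs3 : ((q+D)/D)^D = (D+q)^D/D^D := by
    rw [add_comm q D]; exact Real.div_rpow hDq0.le hD0.le _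
  have hs4 : Real.Gamma (D+1) = D * Real.Gamma D := Real.Gamma_add_one hD0.ne'
  have hs5 : Real.Gamma (q+D+1) = (D+q) * Real.Gamma (D+q) := by
    rw [show q+D+1 = (D+q)+1 by ring, Real.Gamma_add_one (ne_of_gt hDq0)]
  have hs6 : D^(-D) = (D^D)⁻¹ := Real.rpow_neg hD0.le D
  rw [hcR, hs1, hs2, hs3, hs4, hs5, hs6]
  field_simp


/-- The constant `a_{n,p,λ}` for `λ > 1`, with `λ' = λ/(λ-1)`; here
`B(m,l) = Γ(m)Γ(l)/Γ(m+l)` is the Beta function. -/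
noncomputable def anpl (n : ℕ) (p lam : ℝ) : ℝ :=
  (((n : ℝ) / p) * ((n : ℝ) / ((lam / (lam - 1)) * p) + 1) ^ (lam / (lam - 1) - 1) *
      ((lam / (lam - 1)) * p / (n : ℝ) + 1) ^ ((n : ℝ) / p) *
      (Real.Gamma ((n : ℝ) / p) * Real.Gamma (lam / (lam - 1)) /
        Real.Gamma ((n : ℝ) / p + lam / (lam - 1)))) ^ p

/-- The moment inequality of Lutwak, Yang and Zhang, case `λ ∈ (1, ∞)`:
`‖f‖₁^{n+pλ'} ≤ a_{n,p,λ} (∫ f(x) g(K,x)^p dx)^n ‖f‖_λ^{pλ'} vol(K)^p`. -/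
theorem LYZ_moment_inequality (n : ℕ) (hn : 2 ≤ n) (p : ℝ) (hp : 1 ≤ p)
    (lam : ℝ) (hlam : 1 < lam)
    (K : Set (EuclideanSpace ℝ (Fin n))) (hK_conv : Convex ℝ K)
    (hK_cpt : IsCompact K) (hK_zero : (0 : EuclideanSpace ℝ (Fin n)) ∈ interior K)
    (f : EuclideanSpace ℝ (Fin n) → ℝ) (hf_cont : Continuous f)
    (hf_nonneg : ∀ x, 0 ≤ f x) (hf_supp : HasCompactSupport f) (hf_ne : f ≠ 0) :
    (∫ x, f x) ^ ((n : ℝ) + p * (lam / (lam - 1))) ≤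
      anpl n p lam * (∫ x, f x * gauge K x ^ p) ^ (n : ℝ) *
        ((∫ x, |f x| ^ lam) ^ (1 / lam)) ^ (p * (lam / (lam - 1))) *
        (volume K).toReal ^ p := by
  have hp0 : (0:ℝ) < p := lt_of_lt_of_le one_pos hp
  have hlam0 : (0:ℝ) < lam := lt_trans one_pos hlam
  have hlam1 : (0:ℝ) < lam - 1 := by linarith
  set q : ℝ := lam / (lam - 1) with hq_def
  have hpq : lam.HolderConjugate q := Real.HolderConjugate.conjExponent hlam
  have hq1 : 1 < q := hpq.symm.lt
  have hq0 : (0:ℝ) < q := by linarith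
  have hq1' : (0:ℝ) < q - 1 := by linarith
  have hqlam : lam * (q - 1) = q := by
    rw [hq_def]; field_simp; ring
  have hqdivlam : q / lam = q - 1 := hpq.symm.div_conj_eq_sub_one
  have hn0 : (0:ℝ) < (n:ℝ) := by
    have : (0:ℕ) < n := by omega
    exact_mod_cast this
  set D : ℝ := (n:ℝ) / p with hD_def
  have hD0 : (0:ℝ) < D := div_pos hn0 hp0
  have hpD : p * D = (n:ℝ) := by rw [hD_def]; field_simp
  have hDq0 : (0:ℝ) < D + q := by linarith
  -- gauge facts
  have hKnhds : K ∈ nhds 0 := mem_interior_iff_mem_nhds.1 hK_zero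
  have habs : Absorbent ℝ K := absorbent_nhds_zero hKnhds
  have hbdd : Bornology.IsVonNBounded ℝ K :=
    NormedSpace.isVonNBounded_of_isBounded _ hK_cpt.isBounded
  have hg_cont : Continuous (gauge K) := continuous_gauge hK_conv hKnhds
  have hg_nonneg : ∀ x, 0 ≤ gauge K x := fun x => gauge_nonneg x
  -- volume facts
  have hvol_int : volume (interior K) = volume K := by
    refine le_antisymm (measure_mono interior_subset) ?_
    calc volume K ≤ volume (closure K) := measure_mono subset_closure
      _ ≤ volume (interior K ∪ frontier K) := by
          rw [← closure_eq_interior_union_frontier]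
      _ ≤ volume (interior K) + volume (frontier K) := measure_union_le _ _
      _ = volume (interior K) := by rw [hK_conv.addHaar_frontier volume, add_zero]
  set V : ℝ := (volume K).toReal with hV_def
  have hKvol_ne_top : volume K ≠ ⊤ := hK_cpt.measure_lt_top.ne
  have hK_pos : 0 < volume K :=
    lt_of_lt_of_le (isOpen_interior.measure_pos volume ⟨0, hK_zero⟩)
      (measure_mono interior_subset)
  have hV0 : 0 < V := ENNReal.toReal_pos hK_pos.ne' hKvol_ne_top
  -- level sets of the gauge
  have hlevel : ∀ r : ℝ, 0 < r →
      {x : EuclideanSpace ℝ (Fin n) | gauge K x < r} = r • interior K := by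
    intro r hr
    ext x
    rw [Set.mem_smul_set_iff_inv_smul_mem₀ hr.ne',
      ← gauge_lt_one_iff_mem_interior hK_conv hKnhds,
      Set.mem_setOf_eq, gauge_smul_of_nonneg (inv_nonneg.2 hr.le), smul_eq_mul,
      ← div_eq_inv_mul, div_lt_one hr]
  have hvol_level : ∀ r : ℝ, 0 < r →
      (volume {x : EuclideanSpace ℝ (Fin n) | gauge K x < r}).toReal = r ^ (n:ℝ) * V := by
    intro r hr
    rw [hlevel r hr, Measure.addHaar_smul, hvol_int, finrank_euclideanSpace_fin,
      ENNReal.toReal_mul, ENNReal.toReal_ofReal (abs_nonneg _),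
      abs_of_nonneg (pow_nonneg hr.le _), ← Real.rpow_natCast r n]
  -- integrability
  have hgp_cont : Continuous fun x : EuclideanSpace ℝ (Fin n) => gauge K x ^ p :=
    hg_cont.rpow_const (fun x => Or.inr hp0.le)
  have int_f : Integrable f := hf_cont.integrable_of_hasCompactSupport hf_supp
  have int_fg : Integrable (fun x => f x * gauge K x ^ p) :=
    (hf_cont.mul hgp_cont).integrable_of_hasCompactSupport hf_supp.mul_right
  have hflam_cont : Continuous fun x : EuclideanSpace ℝ (Fin n) => f x ^ lam :=
    hf_cont.rpow_const (fun x => Or.inr hlam0.le)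
  have int_flam : Integrable fun x => f x ^ lam :=
    hflam_cont.integrable_of_hasCompactSupport
      (hf_supp.comp_left (g := fun t : ℝ => t ^ lam) (Real.zero_rpow hlam0.ne'))
  -- the truncated-gauge integrand
  have int_max : ∀ α : ℝ, 0 < α →
      Integrable (fun x => max (1 - α * gauge K x ^ p) 0 ^ q) := by
    intro α hα
    apply Continuous.integrable_of_hasCompactSupport
    · exact ((continuous_const.sub (continuous_const.mul hgp_cont)).max
        continuous_const).rpow_const (fun x => Or.inr hq0.le)
    · set R : ℝ := (α⁻¹) ^ (1/p) + 1 with hR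
      have hR0 : 0 < R := by positivity
      refine HasCompactSupport.intro (hK_cpt.smul R) (fun x hx => ?_)
      have hgx : R ≤ gauge K x := by
        by_contra hlt
        push_neg at hlt
        exact hx (Set.smul_set_mono interior_subset
          (by rw [← hlevel R hR0]; exact hlt))
      have h1 : (α⁻¹) ^ (1/p) < gauge K x := lt_of_lt_of_le (by rw [hR]; linarith) hgx
      have h2 : (1:ℝ) < α * gauge K x ^ p := by
        have h3 : ((α⁻¹) ^ (1/p)) ^ p < gauge K x ^ p :=
          Real.rpow_lt_rpow (by positivity) h1 hp0
        rw [← Real.rpow_mul (by positivity), one_div_mul_cancel hp0.ne',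
          Real.rpow_one] at h3
        rw [← mul_lt_mul_iff_right₀ hα] at h3
        rwa [mul_inv_cancel₀ hα.ne'] at h3
      rw [max_eq_right (by linarith), Real.zero_rpow hq0.ne']
  -- positivity of the integrals
  haveI : Nontrivial (EuclideanSpace ℝ (Fin n)) :=
    Module.nontrivial_of_finrank_pos (R := ℝ)
      (by rw [finrank_euclideanSpace_fin]; omega)
  obtain ⟨x₀, hx₀⟩ : ∃ x, 0 < f x := by
    by_contra h
    push_neg at h
    exact hf_ne (funext fun x => le_antisymm (h x) (hf_nonneg x))
  have hfU_open : IsOpen {x : EuclideanSpace ℝ (Fin n) | 0 < f x} :=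
    isOpen_lt continuous_const hf_cont
  set U : Set (EuclideanSpace ℝ (Fin n)) := {x | 0 < f x} ∩ {0}ᶜ with hU_def
  have hU_open : IsOpen U := hfU_open.inter isClosed_singleton.isOpen_compl
  have hU_ne : U.Nonempty := by
    rcases eq_or_ne x₀ 0 with rfl | hne
    · obtain ⟨ε, hε, hball⟩ := Metric.isOpen_iff.1 hfU_open 0 hx₀
      obtain ⟨v, hv⟩ := exists_ne (0 : EuclideanSpace ℝ (Fin n))
      have hv0 : 0 < ‖v‖ := norm_pos_iff.2 hv
      refine ⟨(ε / (2 * ‖v‖)) • v, hball ?_, ?_⟩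
      · rw [Metric.mem_ball, dist_zero_right, norm_smul, Real.norm_eq_abs,
          abs_of_pos (by positivity)]
        have heq : (ε / (2 * ‖v‖)) * ‖v‖ = ε / 2 := by field_simp
        rw [heq]; linarith
      · simp only [Set.mem_compl_iff, Set.mem_singleton_iff]
        exact smul_ne_zero (by positivity) hv
    · exact ⟨x₀, hx₀, hne⟩
  have hU_pos : 0 < volume U := hU_open.measure_pos volume hU_ne
  have hg_pos : ∀ x ∈ U, 0 < gauge K x := by
    intro x hx
    exact (gauge_pos habs hbdd).2 hx.2
  have hI0 : 0 < ∫ x, f x := by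
    rw [integral_pos_iff_support_of_nonneg (fun x => hf_nonneg x) int_f]
    exact lt_of_lt_of_le hU_pos (measure_mono (fun x hx => ne_of_gt hx.1))
  have hIp : 0 < ∫ x, f x * gauge K x ^ p := by
    rw [integral_pos_iff_support_of_nonneg
      (fun x => mul_nonneg (hf_nonneg x) (Real.rpow_nonneg (hg_nonneg x) p)) int_fg]
    refine lt_of_lt_of_le hU_pos (measure_mono (fun x hx => ?_))
    have : 0 < f x * gauge K x ^ p :=
      mul_pos hx.1 (Real.rpow_pos_of_pos (hg_pos x hx) p)
    exact ne_of_gt this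
  have hIL : 0 < ∫ x, f x ^ lam := by
    rw [integral_pos_iff_support_of_nonneg
      (fun x => Real.rpow_nonneg (hf_nonneg x) lam) int_flam]
    refine lt_of_lt_of_le hU_pos (measure_mono (fun x hx => ?_))
    exact ne_of_gt (Real.rpow_pos_of_pos hx.1 lam)
  -- pointwise Young inequality
  have young : ∀ α β : ℝ, 0 < α → 0 < β → ∀ x : EuclideanSpace ℝ (Fin n),
      f x ≤ α * (f x * gauge K x ^ p) + β * f x ^ lam
        + lam ^ (1-q) / q * β ^ (1-q) * max (1 - α * gauge K x ^ p) 0 ^ q := by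
    intro α β hα hβ x
    have hsplit : f x = f x * (1 - α * gauge K x ^ p) + α * (f x * gauge K x ^ p) := by
      ring
    have key : f x * (1 - α * gauge K x ^ p) ≤
        β * f x ^ lam + lam ^ (1-q) / q * β ^ (1-q) * max (1 - α * gauge K x ^ p) 0 ^ q := by
      set s : ℝ := 1 - α * gauge K x ^ p with hs
      rcases le_or_gt s 0 with hs0 | hs0
      · have h1 : f x * s ≤ 0 := mul_nonpos_iff.2 (Or.inl ⟨hf_nonneg x, hs0⟩)
        rw [max_eq_right hs0, Real.zero_rpow hq0.ne', mul_zero]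
        have h3 : 0 ≤ β * f x ^ lam :=
          mul_nonneg hβ.le (Real.rpow_nonneg (hf_nonneg x) _)
        linarith
      · rw [max_eq_left hs0.le]
        have hbl : (0:ℝ) < β * lam := by positivity
        have hY := Real.young_inequality_of_nonneg
          (a := f x * (β*lam) ^ (1/lam)) (b := s * (β*lam) ^ (-(1/lam)))
          (mul_nonneg (hf_nonneg x) (by positivity)) (by positivity) hpq
        have hab : f x * (β*lam) ^ (1/lam) * (s * (β*lam) ^ (-(1/lam))) = f x * s := by
          rw [show f x * (β*lam) ^ (1/lam) * (s * (β*lam) ^ (-(1/lam)))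
              = f x * s * ((β*lam) ^ (1/lam) * (β*lam) ^ (-(1/lam))) by ring,
            ← Real.rpow_add hbl, add_neg_cancel, Real.rpow_zero, mul_one]
        have ha_pow : (f x * (β*lam) ^ (1/lam)) ^ lam = f x ^ lam * (β * lam) := by
          rw [Real.mul_rpow (hf_nonneg x) (by positivity),
            ← Real.rpow_mul hbl.le, one_div_mul_cancel hlam0.ne', Real.rpow_one]
        have hb_pow : (s * (β*lam) ^ (-(1/lam))) ^ q = s ^ q * (β*lam) ^ (-(q-1)) := by
          rw [Real.mul_rpow hs0.le (by positivity), ← Real.rpow_mul hbl.le]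
          congr 2
          rw [← hqdivlam]; ring
        rw [hab, ha_pow, hb_pow] at hY
        have hblq : (β*lam) ^ (-(q-1)) = β ^ (1-q) * lam ^ (1-q) := by
          rw [show -(q-1) = 1-q by ring, Real.mul_rpow hβ.le hlam0.le]
        rw [hblq] at hY
        calc f x * s ≤ f x ^ lam * (β * lam) / lam + s ^ q * (β ^ (1-q) * lam ^ (1-q)) / q := hY
          _ = β * f x ^ lam + lam ^ (1-q) / q * β ^ (1-q) * s ^ q := by
              field_simp
    linarith [hsplit ▸ le_refl (f x), key]
  -- integrated inequality
  have step : ∀ α β : ℝ, 0 < α → 0 < β →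
      (∫ x, f x) ≤ α * (∫ x, f x * gauge K x ^ p) + β * (∫ x, f x ^ lam)
        + lam ^ (1-q) / q * β ^ (1-q) * ∫ x, max (1 - α * gauge K x ^ p) 0 ^ q := by
    intro α β hα hβ
    have i1 : Integrable (fun x => α * (f x * gauge K x ^ p) + β * f x ^ lam) :=
      (int_fg.const_mul α).add (int_flam.const_mul β)
    have i2 : Integrable
        (fun x => lam ^ (1-q) / q * β ^ (1-q) * max (1 - α * gauge K x ^ p) 0 ^ q) :=
      (int_max α hα).const_mul _
    have hint : Integrable (fun x => α * (f x * gauge K x ^ p) + β * f x ^ lam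
        + lam ^ (1-q) / q * β ^ (1-q) * max (1 - α * gauge K x ^ p) 0 ^ q) :=
      i1.add i2
    calc (∫ x, f x) ≤ ∫ x, (α * (f x * gauge K x ^ p) + β * f x ^ lam
        + lam ^ (1-q) / q * β ^ (1-q) * max (1 - α * gauge K x ^ p) 0 ^ q) :=
          integral_mono int_f hint (young α β hα hβ)
      _ = α * (∫ x, f x * gauge K x ^ p) + β * (∫ x, f x ^ lam)
        + lam ^ (1-q) / q * β ^ (1-q) * ∫ x, max (1 - α * gauge K x ^ p) 0 ^ q := by
          rw [integral_add i1 i2,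
            integral_add (int_fg.const_mul α) (int_flam.const_mul β),
            integral_const_mul, integral_const_mul, integral_const_mul]
  -- layer-cake computation of the truncated-gauge integral
  have layer : ∀ α : ℝ, 0 < α → (∫ x, max (1 - α * gauge K x ^ p) 0 ^ q)
      = α ^ (-D) * (V * (q * (Real.Gamma q * Real.Gamma (D+1) / Real.Gamma (q+D+1)))) := by
    intro α hα
    rw [(int_max α hα).integral_eq_integral_meas_lt
      (Filter.Eventually.of_forall (fun x => Real.rpow_nonneg (le_max_right _ _) q))]
    have hcong : ∀ t ∈ Set.Ioi (0:ℝ),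
        (volume {x : EuclideanSpace ℝ (Fin n) | t < max (1 - α * gauge K x ^ p) 0 ^ q}).toReal
        = max (1 - t ^ (q⁻¹)) 0 ^ D * (α ^ (-D) * V) := by
      intro t ht
      have ht0 : (0:ℝ) < t := ht
      rcases lt_or_ge t 1 with ht1 | ht1
      · have htq1 : t ^ (q⁻¹) < 1 := Real.rpow_lt_one ht0.le ht1 (by positivity)
        have htq0 : (0:ℝ) < t ^ (q⁻¹) := Real.rpow_pos_of_pos ht0 _
        set u : ℝ := 1 - t ^ (q⁻¹) with hu
        have hu0 : 0 < u := by rw [hu]; linarith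
        set r : ℝ := (u/α) ^ (p⁻¹) with hr
        have hr0 : 0 < r := Real.rpow_pos_of_pos (div_pos hu0 hα) _
        have hsetid : {x : EuclideanSpace ℝ (Fin n) | t < max (1 - α * gauge K x ^ p) 0 ^ q}
            = {x | gauge K x < r} := by
          ext x
          simp only [Set.mem_setOf_eq]
          rw [← Real.rpow_inv_lt_iff_of_pos ht0.le (le_max_right _ _) hq0,
            lt_max_iff, or_iff_left (not_lt.2 (Real.rpow_nonneg ht0.le _))]
          constructor
          · intro h
            have h2 : gauge K x ^ p < u / α := by
              rw [lt_div_iff₀ hα, mul_comm]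
              rw [hu]; linarith
            exact (Real.lt_rpow_inv_iff_of_pos (hg_nonneg x)
              (div_pos hu0 hα).le hp0).2 h2
          · intro h
            have h2 : gauge K x ^ p < u / α :=
              (Real.lt_rpow_inv_iff_of_pos (hg_nonneg x) (div_pos hu0 hα).le hp0).1 h
            rw [lt_div_iff₀ hα, mul_comm] at h2
            rw [hu] at h2; linarith
        rw [hsetid, hvol_level r hr0, max_eq_left hu0.le]
        have hrn : r ^ (n:ℝ) = u ^ D * α ^ (-D) := by
          rw [hr, ← Real.rpow_mul (div_pos hu0 hα).le]
          have hpe : p⁻¹ * (n:ℝ) = D := by rw [hD_def]; field_simp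
          rw [hpe, Real.div_rpow hu0.le hα.le, Real.rpow_neg hα.le, div_eq_mul_inv]
        rw [hrn]; ring
      · have hset : {x : EuclideanSpace ℝ (Fin n) | t < max (1 - α * gauge K x ^ p) 0 ^ q}
            = ∅ := by
          apply Set.eq_empty_iff_forall_notMem.2
          intro x hx
          simp only [Set.mem_setOf_eq] at hx
          have hgge : 0 ≤ α * gauge K x ^ p :=
            mul_nonneg hα.le (Real.rpow_nonneg (hg_nonneg x) p)
          have hm1 : max (1 - α * gauge K x ^ p) 0 ≤ 1 :=
            max_le (by linarith) zero_le_one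
          have := Real.rpow_le_one (le_max_right _ _) hm1 hq0.le
          linarith
        have hineq : (1:ℝ) ≤ t ^ (q⁻¹) := Real.one_le_rpow ht1 (by positivity)
        rw [hset, max_eq_right (by linarith), Real.zero_rpow hD0.ne', measure_empty]
        simp
    simp only [measureReal_def]
    rw [setIntegral_congr_fun measurableSet_Ioi hcong, integral_mul_const]
    have hsub : (∫ t in Set.Ioi (0:ℝ), max (1 - t ^ (q⁻¹)) 0 ^ D)
        = q * (Real.Gamma q * Real.Gamma (D+1) / Real.Gamma (q+D+1)) := by
      rw [← integral_comp_rpow_Ioi_of_pos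
        (g := fun t : ℝ => max (1 - t ^ (q⁻¹)) 0 ^ D) hq0]
      rw [setIntegral_congr_fun (g := fun x : ℝ => q * (x ^ (q-1) * max (1-x) 0 ^ D))
        measurableSet_Ioi (fun x hx => by
          have hx0 : (0:ℝ) < x := hx
          rw [smul_eq_mul, Real.rpow_rpow_inv hx0.le hq0.ne']
          ring)]
      rw [integral_const_mul, LYZ_beta_aux hq1.le hD0]
    rw [hsub]
    ring
  -- abbreviations
  set E : ℝ := q * (Real.Gamma q * Real.Gamma (D+1) / Real.Gamma (q+D+1)) with hE_def
  have hE0 : 0 < E := by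
    have h1 : 0 < Real.Gamma q := Real.Gamma_pos_of_pos hq0
    have h2 : 0 < Real.Gamma (D+1) := Real.Gamma_pos_of_pos (by linarith)
    have h3 : 0 < Real.Gamma (q+D+1) := Real.Gamma_pos_of_pos (by linarith)
    rw [hE_def]; positivity
  set M : ℝ := V * E with hM_def
  have hM0 : 0 < M := mul_pos hV0 hE0
  set c : ℝ := lam ^ (1-q) / q with hc_def
  have hc0 : 0 < c := div_pos (Real.rpow_pos_of_pos hlam0 _) hq0
  set I0 : ℝ := ∫ x, f x with hI0_def
  set Ip : ℝ := ∫ x, f x * gauge K x ^ p with hIp_def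
  set IL : ℝ := ∫ x, f x ^ lam with hIL_def
  set T : ℝ := (c * (q-1) ^ (1-q) * D ^ (-D) * IL ^ (q-1) * Ip ^ D * M) ^ ((q+D)⁻¹)
    with hT_def
  have hX0 : 0 < c * (q-1) ^ (1-q) * D ^ (-D) * IL ^ (q-1) * Ip ^ D * M :=
    mul_pos (mul_pos (mul_pos (mul_pos (mul_pos hc0
      (Real.rpow_pos_of_pos hq1' _)) (Real.rpow_pos_of_pos hD0 _))
      (Real.rpow_pos_of_pos hIL _)) (Real.rpow_pos_of_pos hIp _)) hM0
  have hT0 : 0 < T := Real.rpow_pos_of_pos hX0 _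
  have hqD_ne : (q+D) ≠ 0 := by positivity
  have hTpow : T ^ (q+D) = c * (q-1) ^ (1-q) * D ^ (-D) * IL ^ (q-1) * Ip ^ D * M := by
    rw [hT_def, ← Real.rpow_mul hX0.le, inv_mul_cancel₀ hqD_ne, Real.rpow_one]
  have hstep := step (D*T/Ip) ((q-1)*T/IL)
    (div_pos (mul_pos hD0 hT0) hIp) (div_pos (mul_pos hq1' hT0) hIL)
  rw [layer _ (div_pos (mul_pos hD0 hT0) hIp)] at hstep
  have e1 : D*T/Ip * Ip = D*T := div_mul_cancel₀ _ hIp.ne'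
  have e2 : (q-1)*T/IL * IL = (q-1)*T := div_mul_cancel₀ _ hIL.ne'
  have third : c * ((q-1)*T/IL) ^ (1-q) * ((D*T/Ip) ^ (-D) * M) = T := by
    have hb1 : ((q-1)*T/IL) ^ (1-q) = (q-1)^(1-q) * T^(1-q) * IL^(q-1) := by
      rw [Real.div_rpow (mul_nonneg hq1'.le hT0.le) hIL.le,
        Real.mul_rpow hq1'.le hT0.le, div_eq_mul_inv, ← Real.rpow_neg hIL.le,
        show -(1-q) = q-1 by ring]
    have hb2 : ((D*T/Ip)) ^ (-D) = D^(-D) * T^(-D) * Ip^D := by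
      rw [Real.div_rpow (mul_nonneg hD0.le hT0.le) hIp.le,
        Real.mul_rpow hD0.le hT0.le, div_eq_mul_inv, ← Real.rpow_neg hIp.le,
        show - -D = D by ring]
    rw [hb1, hb2]
    calc c * ((q-1)^(1-q) * T^(1-q) * IL^(q-1)) * (D^(-D) * T^(-D) * Ip^D * M)
        = (c * (q-1)^(1-q) * D^(-D) * IL^(q-1) * Ip^D * M) * (T^(1-q) * T^(-D)) := by
          ring
      _ = T^(q+D) * T^(1-q + -D) := by rw [hTpow, ← Real.rpow_add hT0]
      _ = T^((q+D) + (1-q + -D)) := by rw [← Real.rpow_add hT0]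
      _ = T := by rw [show (q+D) + (1-q + -D) = 1 by ring, Real.rpow_one]
  rw [e1, e2, third] at hstep
  have hI0T : I0 ≤ (D+q) * T := by linarith
  have key : I0 ^ (q+D) ≤ (D+q)^(q+D) * (c * (q-1)^(1-q) * D^(-D) * IL^(q-1) * Ip^D * M) := by
    calc I0 ^ (q+D) ≤ ((D+q)*T) ^ (q+D) :=
        Real.rpow_le_rpow hI0.le hI0T (by linarith)
      _ = (D+q)^(q+D) * T^(q+D) := Real.mul_rpow (by linarith) hT0.le
      _ = _ := by rw [hTpow]
  clear_value T IL Ip I0 c M E V D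
  -- constant identity
  have hconst_core : (D+q)^(q+D) * (c * (q-1)^(1-q) * D^(-D) * E)
      = D * ((D+q)/q)^(q-1) * ((q+D)/D)^D
        * (Real.Gamma D * Real.Gamma q / Real.Gamma (D+q)) := by
    rw [hc_def, hE_def]
    exact LYZ_const_aux hq1 hD0 hlam0 hqlam
  -- final assembly
  have hILabs : (∫ x, |f x| ^ lam) = IL := by
    rw [hIL_def]
    apply integral_congr_ae
    filter_upwards with x
    rw [abs_of_nonneg (hf_nonneg x)]
  rw [hILabs]
  have hexpL : (n:ℝ) + p * q = (q+D) * p := by rw [← hpD]; ring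
  rw [hexpL]
  have hexpIp : (n:ℝ) = D * p := by rw [← hpD]; ring
  rw [hexpIp]
  rw [Real.rpow_mul hI0.le, Real.rpow_mul hIp.le]
  have hexpIL : (IL ^ (1/lam)) ^ (p*q) = (IL ^ (q-1)) ^ p := by
    rw [← Real.rpow_mul hIL.le, ← Real.rpow_mul hIL.le,
      show 1/lam * (p*q) = (q-1) * p from by rw [← hqdivlam]; ring]
  rw [hexpIL]
  refine le_trans (Real.rpow_le_rpow (Real.rpow_nonneg hI0.le _) key hp0.le)
    (le_of_eq ?_)
  have hA0 : 0 < (D+q)^(q+D) * (c * (q-1)^(1-q) * D^(-D) * E) := by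
    have h1 := Real.rpow_pos_of_pos hDq0 (q+D)
    have h2 : 0 < c * (q-1)^(1-q) * D^(-D) * E :=
      mul_pos (mul_pos (mul_pos hc0 (Real.rpow_pos_of_pos hq1' _))
        (Real.rpow_pos_of_pos hD0 _)) hE0
    exact mul_pos h1 h2
  have hrw : (D+q)^(q+D) * (c * (q-1)^(1-q) * D^(-D) * IL^(q-1) * Ip^D * M)
      = ((D+q)^(q+D) * (c * (q-1)^(1-q) * D^(-D) * E))
        * (Ip^D * (IL^(q-1) * V)) := by
    rw [hM_def]; ring
  rw [hrw]
  rw [Real.mul_rpow hA0.le (mul_nonneg (Real.rpow_nonneg hIp.le _)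
      (mul_nonneg (Real.rpow_nonneg hIL.le _) hV0.le)),
    Real.mul_rpow (Real.rpow_nonneg hIp.le _)
      (mul_nonneg (Real.rpow_nonneg hIL.le _) hV0.le),
    Real.mul_rpow (Real.rpow_nonneg hIL.le _) hV0.le]
  have hanpl : ((D+q)^(q+D) * (c * (q-1)^(1-q) * D^(-D) * E)) ^ p = anpl n p lam := by
    rw [hconst_core]
    unfold anpl
    rw [← hq_def, ← hD_def,
      show (n:ℝ)/(q*p) + 1 = (D+q)/q from by
        rw [hD_def, add_div, div_div, mul_comm p q, div_self hq0.ne'],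
      show q*p/(n:ℝ) + 1 = (q+D)/D from by
        rw [hD_def, add_div, div_div_eq_mul_div, div_self (ne_of_gt (div_pos hn0 hp0))]]
  rw [hanpl]
  ring
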